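/- Let M be a finite set with |M| = m ≥ 1 and let f be a subadditive valuation on subsets of M with f(∅) = 0 and f(S) ≥ 0 for every S ⊆ M. Then there exists a nonnegative weight function w : M → ℝ such that Σ_{b ∈ S} w(b) ≤ f(S) for every S ⊆ M, and Σ_{b ∈ M} w(b) ≥ (3/4) · f(M) / (⌈log₂ m⌉ + 2). -/

import Mathlib

/-- A valuation is subadditive. -/
def SubadditiveVal {ι : Type*} [DecidableEq ι] (V : Finset ι → ℝ) : Prop :=
  ∀ A B : Finset ι, V (A ∪ B) ≤ V A + V B

open Finset

section aux
variable {ι : Type*} [Fintype ι] [DecidableEq ι]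

/-- Monotone closure of `f`. -/
noncomputable def gmin (f : Finset ι → ℝ) (S : Finset ι) : ℝ :=
  (Finset.univ.filter (fun T : Finset ι => S ⊆ T)).inf'
    ⟨Finset.univ, by simp⟩ f

lemma gmin_le (f : Finset ι → ℝ) {S T : Finset ι} (h : S ⊆ T) : gmin f S ≤ f T :=
  Finset.inf'_le f (by simp [h])

lemma gmin_nonneg (f : Finset ι → ℝ) (hnn : ∀ S, 0 ≤ f S) (S : Finset ι) : 0 ≤ gmin f S :=
  Finset.le_inf' _ _ fun T _ => hnn T

lemma gmin_mono (f : Finset ι → ℝ) {S S' : Finset ι} (h : S ⊆ S') : gmin f S ≤ gmin f S' :=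
  Finset.le_inf' _ _ fun T hT => gmin_le f (h.trans (by simpa using (Finset.mem_filter.mp hT).2))

lemma gmin_subadd (f : Finset ι → ℝ) (hsub : ∀ A B : Finset ι, f (A ∪ B) ≤ f A + f B)
    (A B : Finset ι) : gmin f (A ∪ B) ≤ gmin f A + gmin f B := by
  obtain ⟨TA, hTA, hA⟩ := Finset.exists_mem_eq_inf'
    (⟨Finset.univ, by simp⟩ : (Finset.univ.filter (fun T : Finset ι => A ⊆ T)).Nonempty) f
  obtain ⟨TB, hTB, hB⟩ := Finset.exists_mem_eq_inf'
    (⟨Finset.univ, by simp⟩ : (Finset.univ.filter (fun T : Finset ι => B ⊆ T)).Nonempty) f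
  have hA' : A ⊆ TA := by simpa using (Finset.mem_filter.mp hTA).2
  have hB' : B ⊆ TB := by simpa using (Finset.mem_filter.mp hTB).2
  have : gmin f (A ∪ B) ≤ f (TA ∪ TB) :=
    gmin_le f (Finset.union_subset (hA'.trans Finset.subset_union_left)
      (hB'.trans Finset.subset_union_right))
  calc gmin f (A ∪ B) ≤ f (TA ∪ TB) := this
    _ ≤ f TA + f TB := hsub TA TB
    _ = gmin f A + gmin f B := by rw [gmin, gmin, hA, hB]

lemma gmin_univ_ge (f : Finset ι → ℝ) : f Finset.univ ≤ gmin f Finset.univ := by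
  refine Finset.le_inf' _ _ fun T hT => ?_
  have h : Finset.univ ⊆ T := by simpa using (Finset.mem_filter.mp hT).2
  rw [Finset.univ_subset_iff.mp h]

end aux

/-- harmonic step -/
lemma Hstep {u r : ℕ} (hu : 1 ≤ u) (hur : u ≤ r) :
    (u : ℝ) / r + ∑ j ∈ Finset.range (r - u), (1:ℝ)/(j+1)
      ≤ ∑ j ∈ Finset.range r, (1:ℝ)/(j+1) := by
  have hsplit : (∑ j ∈ Finset.Ico 0 (r-u), (1:ℝ)/(j+1))
      + ∑ j ∈ Finset.Ico (r-u) r, (1:ℝ)/(j+1) = ∑ j ∈ Finset.Ico 0 r, (1:ℝ)/(j+1) :=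
    Finset.sum_Ico_consecutive _ (Nat.zero_le _) (Nat.sub_le r u)
  rw [Finset.range_eq_Ico, Finset.range_eq_Ico, ← hsplit]
  have hlb : ∀ j ∈ Finset.Ico (r-u) r, (1:ℝ)/r ≤ (1:ℝ)/(j+1) := by
    intro j hj
    have hj' : j < r := (Finset.mem_Ico.mp hj).2
    have h1 : (0:ℝ) < (j:ℝ)+1 := by positivity
    apply one_div_le_one_div_of_le h1
    exact_mod_cast Nat.succ_le_of_lt hj'
  have := Finset.card_nsmul_le_sum (Finset.Ico (r-u) r) (fun j => (1:ℝ)/(j+1)) ((1:ℝ)/r) hlb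
  rw [Nat.card_Ico, Nat.sub_sub_self hur, nsmul_eq_mul] at this
  have hr0 : (0:ℝ) < r := by exact_mod_cast Nat.lt_of_lt_of_le hu hur
  have : (u:ℝ)/r ≤ ∑ j ∈ Finset.Ico (r-u) r, (1:ℝ)/(j+1) := by
    calc (u:ℝ)/r = (u:ℝ) * (1/r) := by ring
      _ ≤ _ := this
  linarith

lemma Hpow (k : ℕ) : ∑ j ∈ Finset.range (2^k), (1:ℝ)/(j+1) ≤ k + 1 := by
  induction k with
  | zero => simp
  | succ k ih =>
    have hsplit : (∑ j ∈ Finset.Ico (0:ℕ) (2^k), (1:ℝ)/(j+1))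
        + ∑ j ∈ Finset.Ico (2^k : ℕ) (2^(k+1)), (1:ℝ)/(j+1)
        = ∑ j ∈ Finset.Ico (0:ℕ) (2^(k+1)), (1:ℝ)/(j+1) :=
      Finset.sum_Ico_consecutive _ (Nat.zero_le _)
        (Nat.pow_le_pow_right (by norm_num) (Nat.le_succ k))
    have hub : ∀ j ∈ Finset.Ico (2^k : ℕ) (2^(k+1)), (1:ℝ)/(j+1) ≤ (1:ℝ)/(2^k) := by
      intro j hj
      have hj' : 2^k ≤ j := (Finset.mem_Ico.mp hj).1
      have h2 : (0:ℝ) < (2:ℝ)^k := by positivity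
      apply one_div_le_one_div_of_le h2
      have : (2:ℝ)^k ≤ (j:ℝ) := by exact_mod_cast hj'
      linarith
    have hsum := Finset.sum_le_card_nsmul (Finset.Ico (2^k : ℕ) (2^(k+1))) (fun j => (1:ℝ)/(j+1))
      ((1:ℝ)/(2^k)) hub
    rw [Nat.card_Ico] at hsum
    have hcard : 2^(k+1) - 2^k = 2^k := by
      rw [pow_succ]
      omega
    rw [hcard, nsmul_eq_mul] at hsum
    have h2 : (0:ℝ) < (2:ℝ)^k := by positivity
    have hsum' : ∑ j ∈ Finset.Ico (2^k : ℕ) (2^(k+1)), (1:ℝ)/(j+1) ≤ 1 := by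
      calc ∑ j ∈ Finset.Ico (2^k : ℕ) (2^(k+1)), (1:ℝ)/(j+1) ≤ (2^k : ℕ) * (1/(2:ℝ)^k) := hsum
        _ = 1 := by push_cast; field_simp
    rw [Finset.range_eq_Ico, ← hsplit]
    rw [Finset.range_eq_Ico] at ih
    push_cast
    linarith




/-- Every nonnegative normalized subadditive valuation on a finite set of `m ≥ 1` items
dominates an additive valuation whose total weight is at least
`(3/4) · f(M) / (⌈log₂ m⌉ + 2)`. -/
theorem subadditive_dominates_additive {ι : Type*} [Fintype ι] [DecidableEq ι]
    (hm : 1 ≤ Fintype.card ι)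
    (f : Finset ι → ℝ) (hzero : f ∅ = 0) (hnonneg : ∀ S : Finset ι, 0 ≤ f S)
    (hsub : SubadditiveVal f) :
    ∃ w : ι → ℝ, (∀ b, 0 ≤ w b) ∧ (∀ S : Finset ι, ∑ b ∈ S, w b ≤ f S) ∧
      (3 / 4 : ℝ) * f Finset.univ / ((Nat.clog 2 (Fintype.card ι) : ℝ) + 2) ≤ ∑ b, w b := by
  classical
  have hne : Nonempty ι := Fintype.card_pos_iff.mp hm
  set g : Finset ι → ℝ := gmin f with hgdef
  have hg_nonneg : ∀ S, 0 ≤ g S := gmin_nonneg f hnonneg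
  have hg_mono : ∀ {S S' : Finset ι}, S ⊆ S' → g S ≤ g S' := fun h => gmin_mono f h
  have hg_le : ∀ S, g S ≤ f S := fun S => gmin_le f (subset_refl S)
  have hg_sub : ∀ A B, g (A ∪ B) ≤ g A + g B := gmin_subadd f hsub
  have hg_univ : f Finset.univ ≤ g Finset.univ := gmin_univ_ge f
  -- families
  set P : Finset ι → Finset (Finset ι) :=
    fun T => Finset.univ.filter (fun U => U ⊆ T ∧ U.Nonempty) with hPdef
  have hPmem : ∀ {U T : Finset ι}, U ∈ P T ↔ (U ⊆ T ∧ U.Nonempty) := by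
    intro U T; simp [hPdef]
  have hP : ∀ {T : Finset ι}, T.Nonempty → (P T).Nonempty :=
    fun hT => ⟨_, hPmem.mpr ⟨subset_refl _, hT⟩⟩
  set rho : Finset ι → ℝ := fun T =>
    if h : (P T).Nonempty then (P T).inf' h (fun U => g U / U.card) else 0 with hrhodef
  have hrho_nonneg : ∀ T, 0 ≤ rho T := by
    intro T
    rw [hrhodef]
    dsimp only
    split
    · exact Finset.le_inf' _ _ fun U _ => div_nonneg (hg_nonneg U) (Nat.cast_nonneg _)
    · exact le_refl 0
  have hrho_le : ∀ {T U : Finset ι}, U ⊆ T → U.Nonempty → rho T ≤ g U / U.card := by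
    intro T U hUT hUne
    have hT : (P T).Nonempty := ⟨U, hPmem.mpr ⟨hUT, hUne⟩⟩
    rw [hrhodef]
    simp only [dif_pos hT]
    exact Finset.inf'_le _ (hPmem.mpr ⟨hUT, hUne⟩)
  set 𝒩 : Finset (Finset ι) := Finset.univ.filter (fun T : Finset ι => T.Nonempty) with h𝒩def
  have huniv_ne : (Finset.univ : Finset ι).Nonempty := Finset.univ_nonempty
  have h𝒩ne : 𝒩.Nonempty := ⟨Finset.univ, by simp [h𝒩def, huniv_ne]⟩
  set V : ℝ := 𝒩.sup' h𝒩ne (fun T => (T.card : ℝ) * rho T) with hVdef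
  have hVge : ∀ {T : Finset ι}, T.Nonempty → (T.card : ℝ) * rho T ≤ V := by
    intro T hT
    have hmem : T ∈ 𝒩 := by rw [h𝒩def]; exact Finset.mem_filter.mpr ⟨Finset.mem_univ _, hT⟩
    rw [hVdef]
    exact Finset.le_sup' (fun T : Finset ι => (T.card : ℝ) * rho T) hmem
  have hV0 : 0 ≤ V := by
    refine le_trans ?_ (hVge huniv_ne)
    have := hrho_nonneg (Finset.univ : Finset ι)
    positivity
  -- harmonic function
  set H : ℕ → ℝ := fun n => ∑ j ∈ Finset.range n, (1:ℝ)/(j+1) with hHdef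
  -- peeling lemma
  have key : ∀ n (R : Finset ι), R.card ≤ n → g R ≤ V * H R.card := by
    intro n
    induction n with
    | zero =>
      intro R hR
      have : R = ∅ := Finset.card_eq_zero.mp (Nat.le_zero.mp hR)
      subst this
      have : g ∅ ≤ 0 := le_of_le_of_eq (hg_le ∅) hzero
      simpa [hHdef] using this
    | succ n ih =>
      intro R hR
      rcases R.eq_empty_or_nonempty with rfl | hRne
      · have : g ∅ ≤ 0 := le_of_le_of_eq (hg_le ∅) hzero
        simpa [hHdef] using this
      · have hPR := hP hRne
        obtain ⟨U, hU, hUeq⟩ := Finset.exists_mem_eq_inf' hPR (fun U => g U / U.card)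
        obtain ⟨hUR, hUne⟩ := hPmem.mp hU
        have hrhoR : rho R = g U / U.card := by
          rw [hrhodef]; dsimp only; rw [dif_pos hPR]; exact hUeq
        have hUcard : 0 < U.card := Finset.card_pos.mpr hUne
        have hUcardR : (0:ℝ) < U.card := by exact_mod_cast hUcard
        have hRcard : 0 < R.card := Finset.card_pos.mpr hRne
        have hRcardR : (0:ℝ) < R.card := by exact_mod_cast hRcard
        have hgU : g U = rho R * U.card := by
          rw [hrhoR]; field_simp
        have hrho_le_V : rho R ≤ V / R.card := by
          rw [le_div_iff₀ hRcardR]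
          calc rho R * R.card = (R.card : ℝ) * rho R := by ring
            _ ≤ V := hVge hRne
        have hsplit : g R ≤ g U + g (R \ U) := by
          have hun : U ∪ (R \ U) = R := Finset.union_sdiff_of_subset hUR
          calc g R = g (U ∪ (R \ U)) := by rw [hun]
            _ ≤ g U + g (R \ U) := hg_sub _ _
        have hcard_sdiff : (R \ U).card = R.card - U.card := Finset.card_sdiff_of_subset hUR
        have hle_n : (R \ U).card ≤ n := by
          have := Finset.card_le_card hUR
          omega
        have ihr : g (R \ U) ≤ V * H (R \ U).card := ih _ hle_n
        have hHs : (U.card : ℝ) / R.card + H (R.card - U.card) ≤ H R.card := by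
          rw [hHdef]
          exact Hstep hUcard (Finset.card_le_card hUR)
        have h1 : g U ≤ (V / R.card) * U.card := by
          rw [hgU]
          exact mul_le_mul_of_nonneg_right hrho_le_V (le_of_lt hUcardR)
        calc g R ≤ g U + g (R \ U) := hsplit
          _ ≤ (V / R.card) * U.card + V * H (R \ U).card := add_le_add h1 ihr
          _ = V * ((U.card : ℝ) / R.card + H (R.card - U.card)) := by
              rw [hcard_sdiff]; ring
          _ ≤ V * H R.card := mul_le_mul_of_nonneg_left hHs hV0
  -- harmonic bound
  set m : ℕ := Fintype.card ι with hmdef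
  set L : ℕ := Nat.clog 2 m with hLdef
  have hm2L : m ≤ 2 ^ L := Nat.le_pow_clog (by norm_num) m
  have hHm : H m ≤ (L : ℝ) + 1 := by
    have h1 : H m ≤ H (2 ^ L) := by
      rw [hHdef]
      apply Finset.sum_le_sum_of_subset_of_nonneg (Finset.range_subset_range.mpr hm2L)
      intro j _ _; positivity
    exact le_trans h1 (Hpow L)
  -- conclude
  have hcardu : (Finset.univ : Finset ι).card = m := by rw [hmdef]; exact Finset.card_univ
  have hgVH : f Finset.univ ≤ V * ((L:ℝ) + 1) := by
    have h1 : g Finset.univ ≤ V * H m := by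
      have := key m Finset.univ (le_of_eq hcardu)
      rwa [hcardu] at this
    calc f Finset.univ ≤ g Finset.univ := hg_univ
      _ ≤ V * H m := h1
      _ ≤ V * ((L:ℝ) + 1) := mul_le_mul_of_nonneg_left hHm hV0
  -- choose the maximizing T
  obtain ⟨T, hT𝒩, hTeq⟩ := Finset.exists_mem_eq_sup' h𝒩ne (fun T => (T.card : ℝ) * rho T)
  have hTne : T.Nonempty := by
    have := Finset.mem_filter.mp (by rwa [h𝒩def] at hT𝒩)
    exact this.2
  set c : ℝ := rho T with hcdef
  have hc0 : 0 ≤ c := hrho_nonneg T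
  refine ⟨fun b => if b ∈ T then c else 0, ?_, ?_, ?_⟩
  · intro b; by_cases hb : b ∈ T <;> simp [hb, hc0]
  · intro S
    have hsum : ∑ b ∈ S, (if b ∈ T then c else 0) = (S ∩ T).card * c := by
      rw [Finset.sum_ite_mem, Finset.sum_const, nsmul_eq_mul]
    rw [hsum]
    rcases (S ∩ T).eq_empty_or_nonempty with he | hne'
    · rw [he]; simpa using hnonneg S
    · have hcle : c ≤ g (S ∩ T) / (S ∩ T).card := hrho_le Finset.inter_subset_right hne'
      have hcard : (0:ℝ) < (S ∩ T).card := by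
        exact_mod_cast Finset.card_pos.mpr hne'
      have : ((S ∩ T).card : ℝ) * c ≤ g (S ∩ T) := by
        rw [mul_comm]
        exact (le_div_iff₀ hcard).mp hcle
      calc ((S ∩ T).card : ℝ) * c ≤ g (S ∩ T) := this
        _ ≤ g S := hg_mono Finset.inter_subset_left
        _ ≤ f S := hg_le S
  · have htot : ∑ b, (if b ∈ T then c else 0) = V := by
      have : ∑ b, (if b ∈ T then c else 0) = (Finset.univ ∩ T).card * c := by
        rw [Finset.sum_ite_mem, Finset.sum_const, nsmul_eq_mul]
      rw [this, Finset.univ_inter, hVdef, hTeq, mul_comm]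
    rw [htot]
    have hL0 : (0:ℝ) ≤ (L:ℝ) := Nat.cast_nonneg L
    have hf0 : 0 ≤ f Finset.univ := hnonneg _
    rw [div_le_iff₀ (by positivity : (0:ℝ) < (L:ℝ) + 2)]
    nlinarith [hgVH, hV0, hL0, hf0]
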